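/- Let P and U be disjoint distributions on a graph G with U a unit. Every cooperation vertex c of (P,U) has a neighbor with positive cooperation excess, i.e., a neighbor n with exc(P+U,n) > exc(P,n) + exc(U,n). -/
import Mathlib


open Finset

/-- A pebbling move: remove two pebbles from `src`, add one to `tgt`. -/
structure PMove (V : Type*) where
  src : V
  tgt : V

/-- Result of applying one pebbling move to a distribution. -/
def applyMove {V : Type*} [DecidableEq V] (p : V → ℕ) (m : PMove V) : V → ℕ :=
  fun w => if w = m.src then p w - 2 else if w = m.tgt then p w + 1 else p w

/-- A list of moves is executable: each move goes along an edge and has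
two pebbles available at its source. -/
def Executable {V : Type*} [DecidableEq V] (G : SimpleGraph V) :
    (V → ℕ) → List (PMove V) → Prop
  | _, [] => True
  | p, m :: ms => G.Adj m.src m.tgt ∧ 2 ≤ p m.src ∧ Executable G (applyMove p m) ms

/-- The distribution obtained after applying a sequence of moves. -/
def applySeq {V : Type*} [DecidableEq V] (p : V → ℕ) (σ : List (PMove V)) : V → ℕ :=
  σ.foldl applyMove p

/-- `v` is `k`-reachable under `p`. -/
def KReachable {V : Type*} [DecidableEq V] (G : SimpleGraph V) (p : V → ℕ) (k : ℕ) (v : V) :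
    Prop :=
  ∃ σ : List (PMove V), Executable G p σ ∧ k ≤ applySeq p σ v

/-- `v` is reachable under `p`: some pebbling sequence puts a pebble on `v`. -/
def Reachable' {V : Type*} [DecidableEq V] (G : SimpleGraph V) (p : V → ℕ) (v : V) : Prop :=
  KReachable G p 1 v

/-- The maximal number of pebbles that can be moved to `v`. -/
noncomputable def reach {V : Type*} [DecidableEq V] (G : SimpleGraph V) (p : V → ℕ) (v : V) :
    ℕ :=
  sSup {k | KReachable G p k v}

/-- The excess of `v` under `p`. -/
noncomputable def exc {V : Type*} [DecidableEq V] (G : SimpleGraph V) (p : V → ℕ) (v : V) :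
    ℕ :=
  reach G p v - 1

/-- The total excess of `p`. -/
noncomputable def TE {V : Type*} [Fintype V] [DecidableEq V] (G : SimpleGraph V)
    (p : V → ℕ) : ℕ :=
  ∑ v, exc G p v

/-- `p` is solvable: every vertex is reachable. -/
def Solvable {V : Type*} [DecidableEq V] (G : SimpleGraph V) (p : V → ℕ) : Prop :=
  ∀ v, Reachable' G p v

/-- The number of vertices reachable under `p`. -/
noncomputable def cov {V : Type*} [DecidableEq V] (G : SimpleGraph V) (p : V → ℕ) : ℕ :=
  Set.ncard {v | Reachable' G p v}

/-- The number of cooperation vertices of the pair `(p, q)`. -/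
noncomputable def coop {V : Type*} [DecidableEq V] (G : SimpleGraph V) (p q : V → ℕ) : ℕ :=
  Set.ncard {v | Reachable' G (p + q) v ∧ ¬ Reachable' G p v ∧ ¬ Reachable' G q v}

/-- The number of double covered vertices of the pair `(p, q)`. -/
noncomputable def DC {V : Type*} [DecidableEq V] (G : SimpleGraph V) (p q : V → ℕ) : ℕ :=
  Set.ncard {v | Reachable' G p v ∧ Reachable' G q v}

/-- The cooperation excess between `p` and `q`. -/
noncomputable def CE {V : Type*} [Fintype V] [DecidableEq V] (G : SimpleGraph V)
    (p q : V → ℕ) : ℤ :=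
  (TE G (p + q) : ℤ) - TE G p - TE G q

/-- The effect of a pebble placed at `v`. -/
noncomputable def eff {V : Type*} (G : SimpleGraph V) (v : V) : ℚ :=
  ∑ i ∈ Finset.range (G.diam + 1), (1 / 2 : ℚ) ^ i * (Set.ncard {u | G.dist v u = i})

/-- The optimal pebbling number of `G`. -/
noncomputable def piOpt {V : Type*} [Fintype V] [DecidableEq V] (G : SimpleGraph V) : ℕ :=
  sInf {k | ∃ p : V → ℕ, Solvable G p ∧ ∑ v, p v = k}

section Aux

variable {V : Type*} [Fintype V] [DecidableEq V] (G : SimpleGraph V)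

lemma sum_applyMove_le (p : V → ℕ) (m : PMove V) (h2 : 2 ≤ p m.src) :
    ∑ w, applyMove p m w ≤ ∑ w, p w := by
  by_cases h : m.src = m.tgt
  · apply Finset.sum_le_sum
    intro w _
    simp only [applyMove]
    rcases eq_or_ne w m.src with hw | hw
    · rw [if_pos hw]; omega
    · rw [if_neg hw, if_neg (h ▸ hw)]
  · have hrw : applyMove p m =
        Function.update (Function.update p m.tgt (p m.tgt + 1)) m.src (p m.src - 2) := by
      funext w
      simp only [applyMove, Function.update_apply]
      split_ifs <;> simp_all
    have htgt : m.tgt ∈ Finset.univ.erase m.src := by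
      simp [Ne.symm h]
    rw [hrw, Finset.sum_update_of_mem (Finset.mem_univ _), ← Finset.erase_eq,
      Finset.sum_update_of_mem htgt, ← Finset.erase_eq]
    have e1 : ∑ w, p w = p m.src + ∑ w ∈ Finset.univ.erase m.src, p w :=
      (Finset.add_sum_erase _ p (Finset.mem_univ _)).symm
    have e2 : ∑ w ∈ Finset.univ.erase m.src, p w
        = p m.tgt + ∑ w ∈ (Finset.univ.erase m.src).erase m.tgt, p w :=
      (Finset.add_sum_erase _ p htgt).symm
    omega

lemma sum_applySeq_le (p : V → ℕ) (σ : List (PMove V)) (h : Executable G p σ) :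
    ∑ w, applySeq p σ w ≤ ∑ w, p w := by
  induction σ generalizing p with
  | nil => simp [applySeq]
  | cons m ms ih =>
    obtain ⟨_, h2, hex⟩ := h
    calc ∑ w, applySeq p (m :: ms) w = ∑ w, applySeq (applyMove p m) ms w := rfl
      _ ≤ ∑ w, applyMove p m w := ih _ hex
      _ ≤ ∑ w, p w := sum_applyMove_le p m h2

lemma le_reach {p : V → ℕ} {k : ℕ} {v : V} (h : KReachable G p k v) :
    k ≤ reach G p v := by
  apply le_csSup
  · refine ⟨∑ w, p w, fun j hj => ?_⟩
    obtain ⟨σ, hex, hk⟩ := hj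
    exact hk.trans ((Finset.single_le_sum (fun w _ => Nat.zero_le _)
      (Finset.mem_univ v)).trans (sum_applySeq_le G p σ hex))
  · exact h

lemma reach_le_one {p : V → ℕ} {v : V} (h : ∀ k, KReachable G p k v → k ≤ 1) :
    reach G p v ≤ 1 := by
  have hne : ({k | KReachable G p k v}).Nonempty := ⟨0, [], trivial, Nat.zero_le _⟩
  exact csSup_le hne h

lemma Executable.append {p : V → ℕ} {σ τ : List (PMove V)} (h1 : Executable G p σ)
    (h2 : Executable G (applySeq p σ) τ) : Executable G p (σ ++ τ) := by
  induction σ generalizing p with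
  | nil => exact h2
  | cons m ms ih => exact ⟨h1.1, h1.2.1, ih h1.2.2 h2⟩

lemma two_to_reachable {p : V → ℕ} {n c : V} (hk : KReachable G p 2 n)
    (hadj : G.Adj n c) : Reachable' G p c := by
  obtain ⟨σ, hex, h2⟩ := hk
  have hne : c ≠ n := (G.ne_of_adj hadj).symm
  refine ⟨σ ++ [⟨n, c⟩], Executable.append G hex ⟨hadj, h2, trivial⟩, ?_⟩
  have : applySeq p (σ ++ [⟨n, c⟩]) c = applyMove (applySeq p σ) ⟨n, c⟩ c := by
    simp [applySeq, List.foldl_append]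
  rw [this]
  simp [applyMove, hne]

lemma exists_two_neighbor (p : V → ℕ) (c : V) (hpc : p c = 0)
    (σ : List (PMove V)) (hex : Executable G p σ) (h1 : 1 ≤ applySeq p σ c) :
    ∃ n, G.Adj n c ∧ KReachable G p 2 n := by
  induction σ generalizing p with
  | nil => simp [applySeq, hpc] at h1
  | cons m ms ih =>
    obtain ⟨hadj, h2, hex'⟩ := hex
    by_cases htc : m.tgt = c
    · exact ⟨m.src, htc ▸ hadj, [], trivial, h2⟩
    · have hpc' : applyMove p m c = 0 := by
        simp only [applyMove]
        split_ifs with ha hb'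
        · omega
        · exact absurd hb'.symm htc
        · exact hpc
      obtain ⟨n, hadj', σ', hex2, hk⟩ := ih (applyMove p m) hpc' hex' h1
      exact ⟨n, hadj', m :: σ', ⟨hadj, h2, hex2⟩, hk⟩

end Aux

/-- Every cooperation vertex of `(P, U)` (with `U` a unit at `u`, `P u = 0`)
has a neighbor with positive cooperation excess. -/
theorem stmt4 {V : Type*} [Fintype V] [DecidableEq V] (G : SimpleGraph V)
    (P : V → ℕ) (u : V) (b : ℕ) (hb : 1 ≤ b)
    (U : V → ℕ) (hU : U = fun w => if w = u then b else 0) (hPu : P u = 0)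
    (c : V) (hc : Reachable' G (P + U) c ∧ ¬ Reachable' G P c ∧ ¬ Reachable' G U c) :
    ∃ n, G.Adj c n ∧ exc G P n + exc G U n < exc G (P + U) n := by
  obtain ⟨hPU, hP, hU'⟩ := hc
  have hPc : P c = 0 := by
    by_contra h
    exact hP ⟨[], trivial, by simpa [applySeq] using Nat.one_le_iff_ne_zero.mpr h⟩
  have hUc : U c = 0 := by
    by_contra h
    exact hU' ⟨[], trivial, by simpa [applySeq] using Nat.one_le_iff_ne_zero.mpr h⟩
  obtain ⟨σ, hex, h1⟩ := hPU
  have hPUc : (P + U) c = 0 := by simp [Pi.add_apply, hPc, hUc]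
  obtain ⟨n, hadj, hkr⟩ := exists_two_neighbor G (P + U) c hPUc σ hex h1
  refine ⟨n, hadj.symm, ?_⟩
  have h2 : 2 ≤ reach G (P + U) n := le_reach G hkr
  have hPn : reach G P n ≤ 1 := by
    apply reach_le_one
    intro k hk
    by_contra hlt
    push_neg at hlt
    obtain ⟨τ, hτex, hτk⟩ := hk
    exact hP (two_to_reachable G ⟨τ, hτex, le_trans hlt hτk⟩ hadj)
  have hUn : reach G U n ≤ 1 := by
    apply reach_le_one
    intro k hk
    by_contra hlt
    push_neg at hlt
    obtain ⟨τ, hτex, hτk⟩ := hk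
    exact hU' (two_to_reachable G ⟨τ, hτex, le_trans hlt hτk⟩ hadj)
  simp only [exc]
  omega
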